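/- arXiv:2008.01038 — 2 statements merged into one kernel-verified Lean document; each statement's English description precedes it below -/
import Mathlib

section
/- Let η > 0, ε > 0, N ∈ ℕ, and let p, p̃ : Fin N → ℝ satisfy |p̃ k - p k| ≤ 2η for all k. Assume that for every x ∈ ℝ, the number of indices k with x - 4η ≤ p k ≤ x + 4η is at most ε·N. Define the rank functions R_p r = |{k : p k ≤ p r}| and R_{p̃} r = |{k : p̃ k ≤ p̃ r}|. Then for every index r, |R_{p̃} r - R_p r| ≤ 5 ε N. -/
open scoped Classical

/-- Deterministic rank-perturbation bound: if each entry is perturbed by at most `2η`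
and no window `[x - 4η, x + 4η]` contains more than `εN` entries of the original
sequence, then every rank changes by at most `5εN`. -/
theorem rank_perturbation_bound
    {N : ℕ} (η ε : ℝ) (hη : 0 < η) (hε : 0 < ε)
    (p ptilde : Fin N → ℝ)
    (hclose : ∀ k, |ptilde k - p k| ≤ 2 * η)
    (hwindow : ∀ x : ℝ,
      ((Finset.univ.filter (fun k => x - 4 * η ≤ p k ∧ p k ≤ x + 4 * η)).card : ℝ)
        ≤ ε * N) :
    ∀ r : Fin N,
      |((Finset.univ.filter (fun k => ptilde k ≤ ptilde r)).card : ℝ)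
        - ((Finset.univ.filter (fun k => p k ≤ p r)).card : ℝ)| ≤ 5 * ε * N := by
  intro r
  set A := Finset.univ.filter (fun k => ptilde k ≤ ptilde r) with hA
  set B := Finset.univ.filter (fun k => p k ≤ p r) with hB
  set W := Finset.univ.filter
      (fun k => p r - 4 * η ≤ p k ∧ p k ≤ p r + 4 * η) with hW
  have hclose' : ∀ k, |ptilde k - p k| ≤ 2 * η := hclose
  have hAB : A ⊆ B ∪ W := by
    intro k hk
    simp only [hA, Finset.mem_filter, Finset.mem_univ, true_and] at hk
    by_cases h : p k ≤ p r
    · exact Finset.mem_union_left _ (by simp [hB, h])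
    · push_neg at h
      refine Finset.mem_union_right _ ?_
      have h1 := abs_le.mp (hclose k)
      have h2 := abs_le.mp (hclose r)
      simp only [hW, Finset.mem_filter, Finset.mem_univ, true_and]
      constructor <;> nlinarith
  have hBA : B ⊆ A ∪ W := by
    intro k hk
    simp only [hB, Finset.mem_filter, Finset.mem_univ, true_and] at hk
    by_cases h : ptilde k ≤ ptilde r
    · exact Finset.mem_union_left _ (by simp [hA, h])
    · push_neg at h
      refine Finset.mem_union_right _ ?_
      have h1 := abs_le.mp (hclose k)
      have h2 := abs_le.mp (hclose r)
      simp only [hW, Finset.mem_filter, Finset.mem_univ, true_and]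
      constructor <;> nlinarith
  have hWcard : (W.card : ℝ) ≤ ε * N := hwindow (p r)
  have hA_le : (A.card : ℝ) ≤ (B.card : ℝ) + (W.card : ℝ) := by
    have := Finset.card_le_card hAB
    have h2 := Finset.card_union_le B W
    exact_mod_cast le_trans this h2
  have hB_le : (B.card : ℝ) ≤ (A.card : ℝ) + (W.card : ℝ) := by
    have := Finset.card_le_card hBA
    have h2 := Finset.card_union_le A W
    exact_mod_cast le_trans this h2
  rw [abs_le]
  constructor <;> nlinarith
end

section
/- Let N ∈ ℕ with N ≥ 1, M > 0, ε > 0, and let R, R̃ : Fin N → ℝ satisfy 0 ≤ R k ≤ M and |R̃ k - R k| ≤ ε·M for all k. Define σ²(R) = (1/N) ∑ k (R k - (1/N) ∑ l R l)². Then |σ²(R̃) - σ²(R)| ≤ M² (4ε + 2ε²). -/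
/-- The (biased) sample variance of a finite sequence. -/
noncomputable def sampleVar {N : ℕ} (R : Fin N → ℝ) : ℝ :=
  (∑ k, (R k - (∑ l, R l) / N) ^ 2) / N

lemma sampleVar_eq {N : ℕ} (hN : 0 < N) (R : Fin N → ℝ) :
    sampleVar R = (∑ k, R k ^ 2) / N - ((∑ k, R k) / N) ^ 2 := by
  have hn : (N : ℝ) ≠ 0 := by positivity
  unfold sampleVar
  have h : ∑ k, (R k - (∑ l, R l) / N) ^ 2
      = ∑ k, R k ^ 2 - 2 * ((∑ l, R l) / N) * (∑ k, R k)
        + N * ((∑ l, R l) / N) ^ 2 := by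
    have : ∀ k : Fin N, (R k - (∑ l, R l) / N) ^ 2
        = R k ^ 2 - 2 * ((∑ l, R l) / N) * R k + ((∑ l, R l) / N) ^ 2 := by
      intro k; ring
    rw [Finset.sum_congr rfl (fun k _ => this k)]
    rw [Finset.sum_add_distrib, Finset.sum_sub_distrib, ← Finset.mul_sum,
      Finset.sum_const, Finset.card_univ, Fintype.card_fin, nsmul_eq_mul]
  rw [h]
  field_simp
  ring

/-- An entrywise perturbation of a sequence bounded by `M` by at most `εM` perturbs its
sample variance by at most `M²(4ε + 2ε²)`. -/
theorem sample_variance_perturbation_bound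
    {N : ℕ} (hN : 1 ≤ N) (M ε : ℝ) (hM : 0 < M) (hε : 0 < ε)
    (R Rt : Fin N → ℝ)
    (hR : ∀ k, 0 ≤ R k ∧ R k ≤ M)
    (hRt : ∀ k, |Rt k - R k| ≤ ε * M) :
    |sampleVar Rt - sampleVar R| ≤ M ^ 2 * (4 * ε + 2 * ε ^ 2) := by
  have hN0 : 0 < N := hN
  have hn : (0:ℝ) < N := by exact_mod_cast hN0
  have hRtabs : ∀ k, |Rt k| ≤ M + ε * M := by
    intro k
    have h1 := (hR k).1
    have h2 := (hR k).2
    have h3 := hRt k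
    have := abs_sub_abs_le_abs_sub (Rt k) (R k)
    have hRk : |R k| ≤ M := abs_le.mpr ⟨by linarith, h2⟩
    calc |Rt k| ≤ |R k| + |Rt k - R k| := by
          have := abs_add_le (R k) (Rt k - R k)
          simpa using this.trans_eq' (by ring_nf)
      _ ≤ M + ε * M := add_le_add hRk h3
  -- per-entry bound on squares
  have hsq : ∀ k, |Rt k ^ 2 - R k ^ 2| ≤ ε * M * (2 * M + ε * M) := by
    intro k
    have h2 := (hR k).2
    have hRk : |R k| ≤ M := abs_le.mpr ⟨by linarith [(hR k).1], h2⟩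
    have : Rt k ^ 2 - R k ^ 2 = (Rt k - R k) * (Rt k + R k) := by ring
    rw [this, abs_mul]
    have hsum : |Rt k + R k| ≤ 2 * M + ε * M := by
      calc |Rt k + R k| ≤ |Rt k| + |R k| := abs_add_le _ _
        _ ≤ (M + ε * M) + M := add_le_add (hRtabs k) hRk
        _ = 2 * M + ε * M := by ring
    have h3 := hRt k
    have h0 : 0 ≤ |Rt k + R k| := abs_nonneg _
    nlinarith [abs_nonneg (Rt k - R k)]
  -- bounds on means
  set S := ∑ k, R k with hS
  set St := ∑ k, Rt k with hSt
  have hmeanR : 0 ≤ S / N ∧ S / N ≤ M := by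
    constructor
    · apply div_nonneg _ hn.le
      exact Finset.sum_nonneg fun k _ => (hR k).1
    · rw [div_le_iff₀ hn]
      calc S ≤ ∑ _k : Fin N, M := Finset.sum_le_sum fun k _ => (hR k).2
        _ = M * N := by simp [mul_comm]
  have hmeandiff : |St / N - S / N| ≤ ε * M := by
    rw [div_sub_div_same, ← Finset.sum_sub_distrib]
    rw [abs_div, abs_of_pos hn, div_le_iff₀ hn]
    calc |∑ k, (Rt k - R k)| ≤ ∑ k, |Rt k - R k| := Finset.abs_sum_le_sum_abs _ _
      _ ≤ ∑ _k : Fin N, ε * M := Finset.sum_le_sum fun k _ => hRt k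
      _ = N * (ε * M) := by simp [mul_comm]
      _ = ε * M * N := by ring
  have hmeansum : |St / N + S / N| ≤ 2 * M + ε * M := by
    have hSabs : |S / N| ≤ M := abs_le.mpr ⟨by linarith [hmeanR.1], hmeanR.2⟩
    have : |St / N| ≤ M + ε * M := by
      calc |St / N| = |S / N + (St / N - S / N)| := by ring_nf
        _ ≤ |S / N| + |St / N - S / N| := abs_add_le _ _
        _ ≤ M + ε * M := add_le_add hSabs hmeandiff
    calc |St / N + S / N| ≤ |St / N| + |S / N| := abs_add_le _ _
      _ ≤ (M + ε * M) + M := add_le_add this hSabs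
      _ = 2 * M + ε * M := by ring
  rw [sampleVar_eq hN0, sampleVar_eq hN0]
  have h1 : |((∑ k, Rt k ^ 2) - (∑ k, R k ^ 2)) / N| ≤ ε * M * (2 * M + ε * M) := by
    rw [abs_div, abs_of_pos hn, div_le_iff₀ hn, ← Finset.sum_sub_distrib]
    calc |∑ k, (Rt k ^ 2 - R k ^ 2)| ≤ ∑ k, |Rt k ^ 2 - R k ^ 2| :=
          Finset.abs_sum_le_sum_abs _ _
      _ ≤ ∑ _k : Fin N, ε * M * (2 * M + ε * M) := Finset.sum_le_sum fun k _ => hsq k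
      _ = N * (ε * M * (2 * M + ε * M)) := by simp [mul_comm]
      _ = ε * M * (2 * M + ε * M) * N := by ring
  have h2 : |(St / N) ^ 2 - (S / N) ^ 2| ≤ ε * M * (2 * M + ε * M) := by
    have : (St / N) ^ 2 - (S / N) ^ 2 = (St / N - S / N) * (St / N + S / N) := by ring
    rw [this, abs_mul]
    have h0 : 0 ≤ |St / N + S / N| := abs_nonneg _
    nlinarith [abs_nonneg (St / N - S / N)]
  have e : (∑ k, Rt k ^ 2) / (N:ℝ) - (St / N) ^ 2 - ((∑ k, R k ^ 2) / N - (S / N) ^ 2)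
      = ((∑ k, Rt k ^ 2) - (∑ k, R k ^ 2)) / N - ((St / N) ^ 2 - (S / N) ^ 2) := by ring
  rw [e]
  calc |((∑ k, Rt k ^ 2) - (∑ k, R k ^ 2)) / (N:ℝ) - ((St / N) ^ 2 - (S / N) ^ 2)|
      ≤ |((∑ k, Rt k ^ 2) - (∑ k, R k ^ 2)) / (N:ℝ)| + |(St / N) ^ 2 - (S / N) ^ 2| :=
        abs_sub _ _
    _ ≤ ε * M * (2 * M + ε * M) + ε * M * (2 * M + ε * M) := add_le_add h1 h2
    _ = M ^ 2 * (4 * ε + 2 * ε ^ 2) := by ring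
end
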